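/- Consider the dimensionless regularized rim-lamella system on an interval I on which t + t0 > 0, t + t1 > 0, h(t) > 0 and V(t) > 0. Then the velocity defect Δ(t) = ū(t) − U(t) is differentiable and satisfies Δ'(t) + (Δ(t)/(t+t0))·(1 − h_bl(t)/h(t)) = −(2π·R(t)·h(t)/V(t))·(Δ(t)² − c(t)²) − (R(t)/(t+t0)²)·(h_bl(t)/h(t))·Φ(t), where Φ(t) = 3·(1 − h_bl(t)/h(t)) + (1/2)·(t+t0)/(t+t1) and c(t)² = (1 − cos θ)/(We·h(t)). -/

import Mathlib

open Real

/-- In the dimensionless regularized rim-lamella system (Regime 1,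
no slip), the velocity defect `Δ = ū − U` is differentiable and satisfies
`Δ' + (Δ/(t+t0))·(1 − h_bl/h) = −(2πRh/V)·(Δ² − c²) − (R/(t+t0)²)·(h_bl/h)·Φ`,
where `Φ = 3·(1 − h_bl/h) + (1/2)·(t+t0)/(t+t1)` and `c² = (1 − cos θ)/(We·h)`. -/
theorem velocity_defect_equation
    (We t0 t1 a θ A B : ℝ) (hWe : We > 0) (ha : a > 0)
    (R U V h hbl ubar : ℝ → ℝ)
    (hbl_def : ∀ t, hbl t = a * Real.sqrt (t + t1))
    (hubar_def : ∀ t, ubar t = (R t / (t + t0)) * (1 - hbl t / h t))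
    (hpos : ∀ t ∈ Set.Ioo A B, t + t0 > 0 ∧ t + t1 > 0 ∧ h t > 0 ∧ V t > 0)
    (hR : ∀ t ∈ Set.Ioo A B, HasDerivAt R (U t) t)
    (hh : ∀ t ∈ Set.Ioo A B, HasDerivAt h (-(2 / (t + t0)) * (h t - hbl t)) t)
    (hV : ∀ t ∈ Set.Ioo A B, HasDerivAt V (2 * π * R t * h t * (ubar t - U t)) t)
    (hU : ∀ t ∈ Set.Ioo A B, DifferentiableAt ℝ U t)
    (hmom : ∀ t ∈ Set.Ioo A B,
      V t * deriv U t
        = 2 * π * R t * h t * (ubar t - U t) ^ 2 - 2 * π * R t * (1 - Real.cos θ) / We) :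
    ∀ t ∈ Set.Ioo A B,
      DifferentiableAt ℝ (fun s => ubar s - U s) t
      ∧ deriv (fun s => ubar s - U s) t
          + ((ubar t - U t) / (t + t0)) * (1 - hbl t / h t)
        = -(2 * π * R t * h t / V t)
              * ((ubar t - U t) ^ 2 - (1 - Real.cos θ) / (We * h t))
          - (R t / (t + t0) ^ 2) * (hbl t / h t)
              * (3 * (1 - hbl t / h t) + (1 / 2) * (t + t0) / (t + t1)) := by
  intro t ht
  obtain ⟨ht0, ht1, hht, hVt⟩ := hpos t ht
  have hsne : Real.sqrt (t + t1) ≠ 0 := ne_of_gt (Real.sqrt_pos.mpr ht1)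
  -- derivative of hbl
  have hsqrt : HasDerivAt (fun s : ℝ => Real.sqrt (s + t1))
      (1 / (2 * Real.sqrt (t + t1))) t := by
    have := (Real.hasDerivAt_sqrt (x := t + t1) (ne_of_gt ht1)).comp t
      ((hasDerivAt_id t).add_const t1)
    exact this.congr_deriv (by simp)
  have hblfun : hbl = fun s => a * Real.sqrt (s + t1) := funext hbl_def
  have hbl' : HasDerivAt hbl (a * (1 / (2 * Real.sqrt (t + t1)))) t := by
    rw [hblfun]; exact hsqrt.const_mul a
  -- derivative of ubar
  have hA : HasDerivAt (fun s => R s / (s + t0))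
      ((U t * (t + t0) - R t * 1) / (t + t0) ^ 2) t :=
    (hR t ht).div ((hasDerivAt_id t).add_const t0) (ne_of_gt ht0)
  have hB : HasDerivAt (fun s => hbl s / h s)
      ((a * (1 / (2 * Real.sqrt (t + t1))) * h t
        - hbl t * (-(2 / (t + t0)) * (h t - hbl t))) / (h t) ^ 2) t :=
    hbl'.div (hh t ht) (ne_of_gt hht)
  have hC : HasDerivAt (fun s => 1 - hbl s / h s)
      (-((a * (1 / (2 * Real.sqrt (t + t1))) * h t
        - hbl t * (-(2 / (t + t0)) * (h t - hbl t))) / (h t) ^ 2)) t := by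
    exact ((hasDerivAt_const t (1:ℝ)).sub hB).congr_deriv (by simp)
  have hubarfun : ubar = fun s => (R s / (s + t0)) * (1 - hbl s / h s) :=
    funext hubar_def
  have hubar' : HasDerivAt ubar
      ((U t * (t + t0) - R t * 1) / (t + t0) ^ 2 * (1 - hbl t / h t)
        + (R t / (t + t0)) * (-((a * (1 / (2 * Real.sqrt (t + t1))) * h t
          - hbl t * (-(2 / (t + t0)) * (h t - hbl t))) / (h t) ^ 2))) t := by
    rw [hubarfun]; exact hA.mul hC
  have hUd := (hU t ht).hasDerivAt
  have hΔ : HasDerivAt (fun s => ubar s - U s)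
      ((U t * (t + t0) - R t * 1) / (t + t0) ^ 2 * (1 - hbl t / h t)
        + (R t / (t + t0)) * (-((a * (1 / (2 * Real.sqrt (t + t1))) * h t
          - hbl t * (-(2 / (t + t0)) * (h t - hbl t))) / (h t) ^ 2))
        - deriv U t) t := by
    exact hubar'.sub hUd
  refine ⟨hΔ.differentiableAt, ?_⟩
  rw [hΔ.deriv]
  have hdU : deriv U t
      = (2 * π * R t * h t * (ubar t - U t) ^ 2
          - 2 * π * R t * (1 - Real.cos θ) / We) / V t := by
    rw [eq_div_iff hVt.ne']
    linarith [hmom t ht]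
  rw [hdU, hubar_def t, hbl_def t]
  set s := Real.sqrt (t + t1) with hs
  have hs2 : s ^ 2 = t + t1 := Real.sq_sqrt ht1.le
  rw [show t + t1 = s ^ 2 from hs2.symm]
  have hspos : s > 0 := Real.sqrt_pos.mpr ht1
  field_simp
  ring
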